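/- arXiv:2011.05207 — 7 statements merged into one kernel-verified Lean document; each statement's English description precedes it below -/
import Mathlib

section
/- Let λ : [0,T] → ℝ be twice differentiable with λ''(t) ≥ 2ρ λ'(t) on [0,T], where ρ ≠ 0. Then λ(T) − λ(0) ≤ ((1 − e^{−2ρT})/(2ρ)) λ'(T). -/
open Real Set

theorem stmt_1 (T ρ : ℝ) (hT : 0 < T) (hρ : ρ ≠ 0) (f f' f'' : ℝ → ℝ)
    (hderiv1 : ∀ t ∈ Icc (0:ℝ) T, HasDerivAt f (f' t) t)
    (hderiv2 : ∀ t ∈ Icc (0:ℝ) T, HasDerivAt f' (f'' t) t)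
    (hineq : ∀ t ∈ Icc (0:ℝ) T, 2 * ρ * f' t ≤ f'' t) :
    f T - f 0 ≤ ((1 - Real.exp (-2 * ρ * T)) / (2 * ρ)) * f' T := by
  -- g t = exp(-2ρt) * f' t is monotone on [0,T]
  set g : ℝ → ℝ := fun t => Real.exp (-2 * ρ * t) * f' t with hg_def
  have hg : ∀ t ∈ Icc (0:ℝ) T, HasDerivAt g
      (Real.exp (-2 * ρ * t) * (f'' t - 2 * ρ * f' t)) t := by
    intro t ht
    have h1 : HasDerivAt (fun t => Real.exp (-2 * ρ * t))
        ((-2 * ρ) * Real.exp (-2 * ρ * t)) t := by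
      have := ((hasDerivAt_id t).const_mul (-2 * ρ)).exp
      simpa [mul_comm] using this
    have := h1.mul (hderiv2 t ht)
    refine this.congr_deriv ?_
    ring
  have hmono : MonotoneOn g (Icc 0 T) := by
    apply monotoneOn_of_deriv_nonneg (convex_Icc 0 T)
    · exact ContinuousOn.congr (fun t ht => (hg t ht).continuousAt.continuousWithinAt)
        (fun t ht => rfl) |>.mono (by simp)
    · intro t ht
      rw [interior_Icc] at ht
      exact (hg t (Ioo_subset_Icc_self ht)).differentiableAt.differentiableWithinAt
    · intro t ht
      rw [interior_Icc] at ht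
      have ht' := Ioo_subset_Icc_self ht
      rw [(hg t ht').deriv]
      have := hineq t ht'
      have := Real.exp_pos (-2 * ρ * t)
      nlinarith
  -- hence f' t ≤ exp(2ρ(t-T)) * f' T on [0,T]
  have key : ∀ t ∈ Icc (0:ℝ) T, f' t ≤ Real.exp (2 * ρ * t - 2 * ρ * T) * f' T := by
    intro t ht
    have h := hmono ht (right_mem_Icc.mpr hT.le) ht.2
    have hpos := Real.exp_pos (2 * ρ * t)
    have : Real.exp (2 * ρ * t) * (Real.exp (-2 * ρ * t) * f' t)
        ≤ Real.exp (2 * ρ * t) * (Real.exp (-2 * ρ * T) * f' T) :=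
      mul_le_mul_of_nonneg_left h hpos.le
    calc f' t = Real.exp (2 * ρ * t) * (Real.exp (-2 * ρ * t) * f' t) := by
          rw [← mul_assoc, ← Real.exp_add]; ring_nf; simp
      _ ≤ Real.exp (2 * ρ * t) * (Real.exp (-2 * ρ * T) * f' T) := this
      _ = Real.exp (2 * ρ * t - 2 * ρ * T) * f' T := by
          rw [← mul_assoc, ← Real.exp_add]; ring_nf
  -- F t = f t - f' T * exp(2ρ(t-T))/(2ρ) is antitone
  set F : ℝ → ℝ := fun t => f t - f' T * Real.exp (2 * ρ * t - 2 * ρ * T) / (2 * ρ)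
    with hF_def
  have hF : ∀ t ∈ Icc (0:ℝ) T, HasDerivAt F
      (f' t - f' T * Real.exp (2 * ρ * t - 2 * ρ * T)) t := by
    intro t ht
    have h1 : HasDerivAt (fun t => 2 * ρ * t - 2 * ρ * T) (2 * ρ) t := by
      simpa using ((hasDerivAt_id t).const_mul (2 * ρ)).sub_const (2 * ρ * T)
    have h2 := ((h1.exp.const_mul (f' T)).div_const (2 * ρ))
    have := (hderiv1 t ht).sub h2
    refine this.congr_deriv ?_
    field_simp
  have hanti : AntitoneOn F (Icc 0 T) := by
    apply antitoneOn_of_deriv_nonpos (convex_Icc 0 T)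
    · exact ContinuousOn.congr (fun t ht => (hF t ht).continuousAt.continuousWithinAt)
        (fun t ht => rfl) |>.mono (by simp)
    · intro t ht
      rw [interior_Icc] at ht
      exact (hF t (Ioo_subset_Icc_self ht)).differentiableAt.differentiableWithinAt
    · intro t ht
      rw [interior_Icc] at ht
      have ht' := Ioo_subset_Icc_self ht
      rw [(hF t ht').deriv]
      linarith [key t ht']
  have h := hanti (left_mem_Icc.mpr hT.le) (right_mem_Icc.mpr hT.le) hT.le
  simp only [hF_def] at h
  have e1 : (2:ℝ) * ρ * T - 2 * ρ * T = 0 := by ring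
  have e2 : (2:ℝ) * ρ * 0 - 2 * ρ * T = -2 * ρ * T := by ring
  rw [e1, e2, Real.exp_zero] at h
  have heq : ((1 - Real.exp (-2 * ρ * T)) / (2 * ρ)) * f' T
      = f' T * 1 / (2 * ρ) - f' T * Real.exp (-2 * ρ * T) / (2 * ρ) := by ring
  rw [heq]
  linarith
end

section
/- Let Φ : [0,T] → ℝ be twice differentiable with Φ''(t) ≥ Φ'(t)²/(2n) on [0,T] for some n > 0. Then exp((Φ(T) − Φ(0))/(2n)) ≤ 1 + (T/(2n)) Φ'(T). -/
open Real Set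

theorem stmt_4 (T n : ℝ) (hT : 0 < T) (hn : 0 < n) (Φ Φ' Φ'' : ℝ → ℝ)
    (hderiv1 : ∀ t ∈ Icc (0:ℝ) T, HasDerivAt Φ (Φ' t) t)
    (hderiv2 : ∀ t ∈ Icc (0:ℝ) T, HasDerivAt Φ' (Φ'' t) t)
    (hineq : ∀ t ∈ Icc (0:ℝ) T, (Φ' t) ^ 2 / (2 * n) ≤ Φ'' t) :
    Real.exp ((Φ T - Φ 0) / (2 * n)) ≤ 1 + (T / (2 * n)) * Φ' T := by
  have hc : (0:ℝ) < 2 * n := by linarith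
  set g : ℝ → ℝ := fun t => Real.exp (-Φ t / (2 * n)) with hgdef
  set g' : ℝ → ℝ := fun t => -Φ' t / (2 * n) * Real.exp (-Φ t / (2 * n)) with hg'def
  have hgd : ∀ t ∈ Icc (0:ℝ) T, HasDerivAt g (g' t) t := by
    intro t ht
    have h1 : HasDerivAt (fun s => -Φ s / (2 * n)) (-Φ' t / (2 * n)) t :=
      ((hderiv1 t ht).neg).div_const _
    have h2 := h1.exp
    rw [mul_comm (Real.exp _)] at h2
    exact h2
  have hg'd : ∀ t ∈ Icc (0:ℝ) T,
      HasDerivAt g' (-Φ'' t / (2 * n) * Real.exp (-Φ t / (2 * n))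
        + (-Φ' t / (2 * n)) * g' t) t := by
    intro t ht
    have h1 : HasDerivAt (fun s => -Φ' s / (2 * n)) (-Φ'' t / (2 * n)) t :=
      ((hderiv2 t ht).neg).div_const _
    exact h1.mul (hgd t ht)
  have hnonpos : ∀ t ∈ Icc (0:ℝ) T,
      -Φ'' t / (2 * n) * Real.exp (-Φ t / (2 * n)) + (-Φ' t / (2 * n)) * g' t ≤ 0 := by
    intro t ht
    have h := hineq t ht
    have hexp : 0 < Real.exp (-Φ t / (2 * n)) := Real.exp_pos _
    have h2 : (Φ' t) ^ 2 ≤ 2 * n * Φ'' t := by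
      rw [div_le_iff₀ hc] at h; linarith [h]
    have key : -Φ'' t / (2 * n) * Real.exp (-Φ t / (2 * n)) + (-Φ' t / (2 * n)) * g' t
        = Real.exp (-Φ t / (2 * n)) * ((Φ' t) ^ 2 - 2 * n * Φ'' t) / (2 * n) ^ 2 := by
      simp only [hg'def]
      field_simp
      ring
    rw [key]
    apply div_nonpos_of_nonpos_of_nonneg _ (by positivity)
    exact mul_nonpos_of_nonneg_of_nonpos hexp.le (by linarith)
  have hanti : AntitoneOn g' (Icc 0 T) := by
    apply antitoneOn_of_deriv_nonpos (convex_Icc 0 T)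
      (fun t ht => (hg'd t ht).continuousAt.continuousWithinAt)
    · intro x hx
      rw [interior_Icc] at hx
      exact ((hg'd x (Ioo_subset_Icc_self hx)).differentiableAt).differentiableWithinAt
    · intro x hx
      rw [interior_Icc] at hx
      rw [(hg'd x (Ioo_subset_Icc_self hx)).deriv]
      exact hnonpos x (Ioo_subset_Icc_self hx)
  obtain ⟨x, hx, hslope⟩ := exists_hasDerivAt_eq_slope g g' hT
    (fun t ht => (hgd t ht).continuousAt.continuousWithinAt)
    (fun t ht => hgd t (Ioo_subset_Icc_self ht))
  have h1 : g' T ≤ g' x := hanti (Ioo_subset_Icc_self hx) (right_mem_Icc.2 hT.le) hx.2.le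
  rw [hslope] at h1
  have h2 : g' T * (T - 0) ≤ g T - g 0 := (le_div_iff₀ (by linarith)).mp h1
  -- so g 0 ≤ g T - T * g' T
  have h3 : g 0 ≤ g T - g' T * T := by linarith [h2]
  have hE : (0:ℝ) < Real.exp (Φ T / (2 * n)) := Real.exp_pos _
  have h4 := mul_le_mul_of_nonneg_left h3 hE.le
  have lhs_eq : Real.exp (Φ T / (2 * n)) * g 0 = Real.exp ((Φ T - Φ 0) / (2 * n)) := by
    simp only [hgdef]
    rw [← Real.exp_add]
    ring_nf
  have rhs_eq : Real.exp (Φ T / (2 * n)) * (g T - g' T * T) = 1 + (T / (2 * n)) * Φ' T := by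
    simp only [hgdef, hg'def]
    have e1 : Real.exp (Φ T / (2 * n)) * Real.exp (-Φ T / (2 * n)) = 1 := by
      rw [← Real.exp_add]; ring_nf; exact Real.exp_zero
    have : Real.exp (Φ T / (2 * n)) * (Real.exp (-Φ T / (2 * n))
        - -Φ' T / (2 * n) * Real.exp (-Φ T / (2 * n)) * T)
        = Real.exp (Φ T / (2 * n)) * Real.exp (-Φ T / (2 * n)) * (1 + T / (2 * n) * Φ' T) := by
      ring
    rw [this, e1, one_mul]
  rw [lhs_eq, rhs_eq] at h4
  exact h4
end

section
/- Let Φ : [0,T] → ℝ be twice differentiable with Φ''(t) ≥ Φ'(t)²/(2n) on [0,T] for some n > 0. Then exp((Φ(0) − Φ(T))/(2n)) ≤ 1 − (T/(2n)) Φ'(0). -/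
open Real Set

theorem stmt_5 (T n : ℝ) (hT : 0 < T) (hn : 0 < n) (Φ Φ' Φ'' : ℝ → ℝ)
    (hderiv1 : ∀ t ∈ Icc (0:ℝ) T, HasDerivAt Φ (Φ' t) t)
    (hderiv2 : ∀ t ∈ Icc (0:ℝ) T, HasDerivAt Φ' (Φ'' t) t)
    (hineq : ∀ t ∈ Icc (0:ℝ) T, (Φ' t) ^ 2 / (2 * n) ≤ Φ'' t) :
    Real.exp ((Φ 0 - Φ T) / (2 * n)) ≤ 1 - (T / (2 * n)) * Φ' 0 := by
  have h2n : (0:ℝ) < 2 * n := by linarith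
  set g : ℝ → ℝ := fun t => Real.exp (-Φ t / (2 * n)) with hgdef
  set g' : ℝ → ℝ := fun t => (-Φ' t / (2 * n)) * g t with hg'def
  have hgpos : ∀ t, 0 < g t := fun t => Real.exp_pos _
  have hg : ∀ t ∈ Icc (0:ℝ) T, HasDerivAt g (g' t) t := by
    intro t ht
    have := ((hderiv1 t ht).neg.div_const (2 * n)).exp
    convert this using 1
    show (-Φ' t / (2 * n)) * Real.exp (-Φ t / (2 * n)) = Real.exp ((-Φ) t / (2 * n)) * (-Φ' t / (2 * n))
    simp only [Pi.neg_apply]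
    ring
    rfl
  have hg' : ∀ t ∈ Icc (0:ℝ) T,
      HasDerivAt g' ((-Φ'' t / (2 * n)) * g t + (-Φ' t / (2 * n)) * g' t) t := by
    intro t ht
    exact ((hderiv2 t ht).neg.div_const (2 * n)).mul (hg t ht)
  have hd_nonpos : ∀ t ∈ Icc (0:ℝ) T,
      (-Φ'' t / (2 * n)) * g t + (-Φ' t / (2 * n)) * g' t ≤ 0 := by
    intro t ht
    have h1 := hineq t ht
    have hgt := hgpos t
    have : (-Φ'' t / (2 * n)) * g t + (-Φ' t / (2 * n)) * g' t
        = ((Φ' t) ^ 2 / (2 * n) ^ 2 - Φ'' t / (2 * n)) * g t := by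
      simp only [hg'def]; ring
    rw [this]
    apply mul_nonpos_of_nonpos_of_nonneg _ hgt.le
    have h2 : (Φ' t) ^ 2 / (2 * n) ^ 2 ≤ Φ'' t / (2 * n) := by
      rw [div_le_div_iff₀ (by positivity) h2n]
      have h1' := (div_le_iff₀ h2n).mp h1
      nlinarith [h1', h2n]
    linarith
  -- g' is antitone on Icc 0 T
  have hanti : AntitoneOn g' (Icc 0 T) := by
    have hcont : ContinuousOn g' (Icc 0 T) := fun t ht => (hg' t ht).continuousAt.continuousWithinAt
    apply antitoneOn_of_deriv_nonpos (convex_Icc 0 T) hcont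
    · intro t ht
      rw [interior_Icc] at ht
      exact (hg' t (Ioo_subset_Icc_self ht)).differentiableAt.differentiableWithinAt
    · intro t ht
      rw [interior_Icc] at ht
      rw [(hg' t (Ioo_subset_Icc_self ht)).deriv]
      exact hd_nonpos t (Ioo_subset_Icc_self ht)
  -- MVT
  obtain ⟨c, hc, hslope⟩ := exists_hasDerivAt_eq_slope g g' hT
    (fun t ht => (hg t ht).continuousAt.continuousWithinAt)
    (fun t ht => hg t (Ioo_subset_Icc_self ht))
  have hc' : c ∈ Icc (0:ℝ) T := Ioo_subset_Icc_self hc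
  have hle : g' c ≤ g' 0 := hanti (left_mem_Icc.2 hT.le) hc' hc.1.le
  have key : g T ≤ g 0 + T * g' 0 := by
    have : g T - g 0 = T * g' c := by
      field_simp at hslope
      rw [hslope, sub_zero]; field_simp
    nlinarith [hle, hT]
  -- conclude
  have hg0 : g 0 = Real.exp (-Φ 0 / (2 * n)) := rfl
  have hmain : g T ≤ (1 - T / (2 * n) * Φ' 0) * g 0 := by
    have : g 0 + T * g' 0 = (1 - T / (2 * n) * Φ' 0) * g 0 := by
      simp only [hg'def]; ring
    linarith [key, this.symm.le]
  have hexp : Real.exp ((Φ 0 - Φ T) / (2 * n)) * g 0 = g T := by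
    rw [hg0, hgdef, ← Real.exp_add]
    ring_nf
  rw [← mul_le_mul_iff_of_pos_right (hgpos 0), hexp]
  exact hmain
end

section
/- Let F : ℝ^d → ℝ be C² and (ρ,∞)-convex, i.e. F''(x) ≥ ρ Id as quadratic forms for all x. Let X : [0,T] → ℝ^d be a C² solution of Newton's equation Ẍ(t) = F''(X(t))F'(X(t)), and define λ(t) = ∫₀ᵗ |Ẋ(s) + F'(X(s))|² ds. Then λ''(t) ≥ 2ρ λ'(t) for all t ∈ (0,T). -/
open Real Set
open scoped RealInnerProductSpace

noncomputable def dualIso (d : ℕ) :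
    StrongDual ℝ (EuclideanSpace ℝ (Fin d)) ≃ₗᵢ[ℝ] EuclideanSpace ℝ (Fin d) :=
  (InnerProductSpace.toDual ℝ _).symm

lemma gradient_eq_dualIso {d : ℕ} (f : EuclideanSpace ℝ (Fin d) → ℝ) :
    gradient f = fun x => dualIso d (fderiv ℝ f x) := rfl

lemma inner_dualIso {d : ℕ} (y : StrongDual ℝ (EuclideanSpace ℝ (Fin d)))
    (v : EuclideanSpace ℝ (Fin d)) : ⟪dualIso d y, v⟫ = y v :=
  InnerProductSpace.toDual_symm_apply

theorem stmt_8 (d : ℕ) (T ρ : ℝ) (hT : 0 < T)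
    (F : EuclideanSpace ℝ (Fin d) → ℝ) (hF : ContDiff ℝ 2 F)
    (hconv : ∀ x v : EuclideanSpace ℝ (Fin d),
      ρ * ‖v‖ ^ 2 ≤ ⟪fderiv ℝ (gradient F) x v, v⟫)
    (X : ℝ → EuclideanSpace ℝ (Fin d)) (hX : ContDiff ℝ 2 X)
    (hNewton : ∀ t ∈ Icc (0:ℝ) T,
      deriv (deriv X) t = (1/2 : ℝ) • gradient (fun x => ‖gradient F x‖ ^ 2) (X t)) :
    ∀ t ∈ Ioo (0:ℝ) T,
      2 * ρ * deriv (fun u => ∫ s in (0:ℝ)..u, ‖deriv X s + gradient F (X s)‖ ^ 2) t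
        ≤ deriv (deriv (fun u => ∫ s in (0:ℝ)..u, ‖deriv X s + gradient F (X s)‖ ^ 2)) t := by
  intro t ht
  -- gradient F is C¹
  have hFd : ContDiff ℝ 1 (fderiv ℝ F) := hF.fderiv_right (by norm_num)
  have hg1 : ContDiff ℝ 1 (gradient F) := by
    rw [gradient_eq_dualIso]
    exact (dualIso d).contDiff.comp hFd
  -- symmetry of the Hessian
  have hHsym : ∀ x u v : EuclideanSpace ℝ (Fin d),
      ⟪fderiv ℝ (gradient F) x u, v⟫ = ⟪fderiv ℝ (gradient F) x v, u⟫ := by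
    intro x u v
    have hsymm : IsSymmSndFDerivAt ℝ F x := hF.contDiffAt.isSymmSndFDerivAt (by simp [minSmoothness_of_isRCLikeNormedField])
    have hcomp : fderiv ℝ (gradient F) x
        = ((dualIso d).toContinuousLinearEquiv :
            StrongDual ℝ (EuclideanSpace ℝ (Fin d)) →L[ℝ] EuclideanSpace ℝ (Fin d)).comp
          (fderiv ℝ (fderiv ℝ F) x) := by
      rw [gradient_eq_dualIso]
      exact (dualIso d).comp_fderiv
    rw [hcomp]
    simp only [ContinuousLinearMap.coe_comp', Function.comp_apply,
      ContinuousLinearEquiv.coe_coe, LinearIsometryEquiv.coe_toContinuousLinearEquiv]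
    rw [inner_dualIso, inner_dualIso]
    exact hsymm u v
  -- deriv X is C¹
  have hXd : ContDiff ℝ 1 (deriv X) := by
    have h2 : ContDiff ℝ ((1 : ℕ) + 1) X := by exact_mod_cast hX
    exact (contDiff_succ_iff_deriv.mp h2).2.2
  have hXdiff : Differentiable ℝ X := hX.differentiable (by norm_num)
  -- the function V and g
  set V : ℝ → EuclideanSpace ℝ (Fin d) := fun s => deriv X s + gradient F (X s) with hV
  have hVc : Continuous V := (hXd.continuous).add (hg1.continuous.comp hX.continuous)
  set g : ℝ → ℝ := fun s => ‖V s‖ ^ 2 with hg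
  have hgc : Continuous g := (hVc.norm).pow 2
  -- the first derivative of λ is g
  have hL1 : deriv (fun u => ∫ s in (0:ℝ)..u, ‖deriv X s + gradient F (X s)‖ ^ 2)
      = g := by
    funext u
    exact Continuous.deriv_integral _ hgc 0 u
  rw [hL1]
  -- V has derivative W at t
  set x := X t with hx
  set H : EuclideanSpace ℝ (Fin d) →L[ℝ] EuclideanSpace ℝ (Fin d) :=
    fderiv ℝ (gradient F) x with hH
  set W : EuclideanSpace ℝ (Fin d) := deriv (deriv X) t + H (deriv X t) with hW
  have hXd2 : HasDerivAt (deriv X) (deriv (deriv X) t) t :=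
    ((hXd.differentiable one_ne_zero) t).hasDerivAt
  have hgrad2 : HasDerivAt (fun s => gradient F (X s)) (H (deriv X t)) t := by
    have h1 : HasFDerivAt (gradient F) H x := ((hg1.differentiable one_ne_zero) x).hasFDerivAt
    exact h1.comp_hasDerivAt t (hXdiff t).hasDerivAt
  have hVd : HasDerivAt V W t := hXd2.add hgrad2
  -- g has derivative 2⟪W, V t⟫ at t
  have hgd : HasDerivAt g (2 * ⟪W, V t⟫) t := by
    have h := (hVd.inner ℝ hVd : HasDerivAt (fun s => ⟪V s, V s⟫)
      (⟪V t, W⟫ + ⟪W, V t⟫) t)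
    have heq : (fun s => ⟪V s, V s⟫) = g := by
      funext s; exact real_inner_self_eq_norm_sq (V s)
    rw [heq] at h
    have h2 : ⟪V t, W⟫ + ⟪W, V t⟫ = 2 * ⟪W, V t⟫ := by
      rw [real_inner_comm (V t) W]; ring
    rwa [h2] at h
  rw [hgd.deriv]
  -- the gradient of ‖gradient F ·‖² at x
  have hGrad2 : ∀ v : EuclideanSpace ℝ (Fin d),
      ⟪gradient (fun y => ‖gradient F y‖ ^ 2) x, v⟫ = 2 * ⟪H (gradient F x), v⟫ := by
    intro v
    rw [gradient_eq_dualIso, inner_dualIso]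
    have heq : (fun y : EuclideanSpace ℝ (Fin d) => ‖gradient F y‖ ^ 2)
        = fun y => ⟪gradient F y, gradient F y⟫ := by
      funext y; exact (real_inner_self_eq_norm_sq (gradient F y)).symm
    rw [heq]
    have hdiff : DifferentiableAt ℝ (gradient F) x := (hg1.differentiable one_ne_zero) x
    rw [fderiv_inner_apply ℝ hdiff hdiff v]
    have e1 : ⟪fderiv ℝ (gradient F) x v, gradient F x⟫
        = ⟪fderiv ℝ (gradient F) x (gradient F x), v⟫ := hHsym x v (gradient F x)
    have e2 : ⟪gradient F x, fderiv ℝ (gradient F) x v⟫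
        = ⟪fderiv ℝ (gradient F) x v, gradient F x⟫ := real_inner_comm _ _
    simp only [hH]
    linarith
  -- Newton's equation
  have hNt : deriv (deriv X) t = (1/2 : ℝ) • gradient (fun x => ‖gradient F x‖ ^ 2) x :=
    hNewton t (Ioo_subset_Icc_self ht)
  -- compute ⟪W, V t⟫
  have hWV : ⟪W, V t⟫ = ⟪H (V t), V t⟫ := by
    have hVt : V t = deriv X t + gradient F x := rfl
    rw [hW, hNt, inner_add_left, real_inner_smul_left, hGrad2 (V t), hVt, map_add,
      inner_add_left]
    ring
  have hineq : ρ * ‖V t‖ ^ 2 ≤ ⟪H (V t), V t⟫ := hconv x (V t)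
  rw [← hWV] at hineq
  calc 2 * ρ * g t = 2 * (ρ * ‖V t‖ ^ 2) := by rw [hg]; ring
    _ ≤ 2 * ⟪W, V t⟫ := by linarith
end

section
/- Let F : ℝ^d → ℝ be C² with F'' ≥ ρ Id (ρ ≠ 0), and let X : [0,T] → ℝ^d solve Ẍ = F''(X)F'(X) with X(0)=x, X(T)=y. Then ∫₀ᵀ (|Ẋ(t)|² + |F'(X(t))|²) dt + 2(F(y) − F(x)) ≤ ((1 − e^{−2ρT})/(2ρ)) |Ẋ(T) + F'(y)|². -/
open Real Set
open scoped RealInnerProductSpace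

theorem grad_inner (d : ℕ) (F : EuclideanSpace ℝ (Fin d) → ℝ) (z v : EuclideanSpace ℝ (Fin d)) :
    ⟪gradient F z, v⟫ = fderiv ℝ F z v := by
  simp [gradient, InnerProductSpace.toDual_symm_apply]

theorem grad_contDiff (d : ℕ) (F : EuclideanSpace ℝ (Fin d) → ℝ) (hF : ContDiff ℝ 2 F) :
    ContDiff ℝ 1 (gradient F) :=
  (InnerProductSpace.toDual ℝ _).symm.toContinuousLinearEquiv.contDiff.comp
    (hF.fderiv_right (by norm_num))

theorem fderiv_grad_symm (d : ℕ) (F : EuclideanSpace ℝ (Fin d) → ℝ) (hF : ContDiff ℝ 2 F)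
    (z u v : EuclideanSpace ℝ (Fin d)) :
    ⟪fderiv ℝ (gradient F) z u, v⟫ = ⟪fderiv ℝ (gradient F) z v, u⟫ := by
  have hG : ContDiff ℝ 1 (gradient F) := grad_contDiff d F hF
  have hGd : DifferentiableAt ℝ (gradient F) z := (hG.differentiable one_ne_zero).differentiableAt
  have hFd : DifferentiableAt ℝ (fderiv ℝ F) z :=
    ((hF.fderiv_right (le_refl 2)).differentiable one_ne_zero).differentiableAt
  have key : ∀ w : EuclideanSpace ℝ (Fin d),
      ⟪fderiv ℝ (gradient F) z w, v⟫ = fderiv ℝ (fderiv ℝ F) z w v → True := fun _ _ => trivial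
  have main : ∀ a b : EuclideanSpace ℝ (Fin d),
      ⟪fderiv ℝ (gradient F) z a, b⟫ = fderiv ℝ (fderiv ℝ F) z a b := by
    intro a b
    have h1 : HasFDerivAt (fun w => ⟪gradient F w, b⟫)
        (((innerSL ℝ).flip b).comp (fderiv ℝ (gradient F) z)) z :=
      (((innerSL ℝ).flip b).hasFDerivAt).comp z hGd.hasFDerivAt
    have h2 : HasFDerivAt (fun w => fderiv ℝ F w b)
        ((ContinuousLinearMap.apply ℝ ℝ b).comp (fderiv ℝ (fderiv ℝ F) z)) z :=
      ((ContinuousLinearMap.apply ℝ ℝ b).hasFDerivAt).comp z hFd.hasFDerivAt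
    have heq : (fun w => ⟪gradient F w, b⟫) = (fun w => fderiv ℝ F w b) := by
      funext w; exact grad_inner d F w b
    rw [heq] at h1
    have := h1.unique h2
    have := congrFun (congrArg DFunLike.coe this) a
    simp only [ContinuousLinearMap.coe_comp', Function.comp_apply, ContinuousLinearMap.flip_apply, innerSL_apply_apply, ContinuousLinearMap.apply_apply] at this
    exact this
  rw [main u v, main v u]
  exact (hF.contDiffAt.isSymmSndFDerivAt (by simp [minSmoothness_of_isRCLikeNormedField])) u v

theorem newton_rw (d : ℕ) (F : EuclideanSpace ℝ (Fin d) → ℝ) (hF : ContDiff ℝ 2 F)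
    (z : EuclideanSpace ℝ (Fin d)) :
    (1/2 : ℝ) • gradient (fun w => ‖gradient F w‖ ^ 2) z
      = fderiv ℝ (gradient F) z (gradient F z) := by
  have hG : ContDiff ℝ 1 (gradient F) := grad_contDiff d F hF
  have hGd : DifferentiableAt ℝ (gradient F) z := (hG.differentiable one_ne_zero).differentiableAt
  have hdφ : HasFDerivAt (fun w => ‖gradient F w‖ ^ 2)
      ((fderivInnerCLM ℝ (gradient F z, gradient F z)).comp
        ((fderiv ℝ (gradient F) z).prod (fderiv ℝ (gradient F) z))) z := by
    have h := hGd.hasFDerivAt.inner ℝ hGd.hasFDerivAt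
    have : (fun w => ‖gradient F w‖ ^ 2) = fun w => ⟪gradient F w, gradient F w⟫ := by
      funext w; rw [real_inner_self_eq_norm_sq]
    rw [this]; exact h
  apply ext_inner_right ℝ
  intro v
  have h1 : ⟪gradient (fun w => ‖gradient F w‖ ^ 2) z, v⟫
      = fderiv ℝ (fun w => ‖gradient F w‖ ^ 2) z v := grad_inner d _ z v
  rw [hdφ.fderiv] at h1
  have h2 : ⟪(1/2 : ℝ) • gradient (fun w => ‖gradient F w‖ ^ 2) z, v⟫
      = (1/2 : ℝ) * ⟪gradient (fun w => ‖gradient F w‖ ^ 2) z, v⟫ := real_inner_smul_left _ _ _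
  rw [h2, h1]
  simp only [fderivInnerCLM_apply, ContinuousLinearMap.coe_comp', Function.comp_apply,
    ContinuousLinearMap.prod_apply]
  have hsymm : ⟪gradient F z, fderiv ℝ (gradient F) z v⟫
      = ⟪fderiv ℝ (gradient F) z (gradient F z), v⟫ := by
    rw [real_inner_comm]; exact fderiv_grad_symm d F hF z v (gradient F z)
  have hsymm2 : ⟪fderiv ℝ (gradient F) z v, gradient F z⟫
      = ⟪fderiv ℝ (gradient F) z (gradient F z), v⟫ := fderiv_grad_symm d F hF z v (gradient F z)
  rw [hsymm, hsymm2]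
  ring

theorem stmt_10 (d : ℕ) (T ρ : ℝ) (hT : 0 < T) (hρ : ρ ≠ 0)
    (F : EuclideanSpace ℝ (Fin d) → ℝ) (hF : ContDiff ℝ 2 F)
    (hconv : ∀ x v : EuclideanSpace ℝ (Fin d),
      ρ * ‖v‖ ^ 2 ≤ ⟪fderiv ℝ (gradient F) x v, v⟫)
    (X : ℝ → EuclideanSpace ℝ (Fin d)) (hX : ContDiff ℝ 2 X)
    (x y : EuclideanSpace ℝ (Fin d)) (hx : X 0 = x) (hy : X T = y)
    (hNewton : ∀ t ∈ Icc (0:ℝ) T,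
      deriv (deriv X) t = (1/2 : ℝ) • gradient (fun z => ‖gradient F z‖ ^ 2) (X t)) :
    (∫ t in (0:ℝ)..T, (‖deriv X t‖ ^ 2 + ‖gradient F (X t)‖ ^ 2)) + 2 * (F y - F x)
      ≤ ((1 - Real.exp (-2 * ρ * T)) / (2 * ρ)) * ‖deriv X T + gradient F y‖ ^ 2 := by
  set G := gradient F with hGdef
  have hG : ContDiff ℝ 1 G := grad_contDiff d F hF
  have hX1 : Differentiable ℝ X := hX.differentiable two_ne_zero
  have hdX : ContDiff ℝ 1 (deriv X) := by
    have h2 : ContDiff ℝ ((1 : WithTop ℕ∞) + 1) X := by norm_num; exact hX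
    exact (contDiff_succ_iff_deriv.mp h2).2.2
  have hdX1 : Differentiable ℝ (deriv X) := hdX.differentiable one_ne_zero
  set V : ℝ → EuclideanSpace ℝ (Fin d) := fun t => deriv X t + G (X t) with hVdef
  set V' : ℝ → EuclideanSpace ℝ (Fin d) :=
    fun t => deriv (deriv X) t + fderiv ℝ G (X t) (deriv X t) with hV'def
  have hV : ∀ t, HasDerivAt V (V' t) t := by
    intro t
    exact (hdX1 t).hasDerivAt.add
      (((hG.differentiable one_ne_zero) (X t)).hasFDerivAt.comp_hasDerivAt t (hX1 t).hasDerivAt)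
  have hVcont : Continuous V :=
    hdX.continuous.add (hG.continuous.comp hX.continuous)
  set g : ℝ → ℝ := fun t => ‖V t‖ ^ 2 with hgdef
  have hgcont : Continuous g := (hVcont.norm).pow 2
  have hg : ∀ t, HasDerivAt g (2 * ⟪V' t, V t⟫) t := by
    intro t
    have h := (hV t).inner ℝ (hV t)
    have heq : g = fun t => ⟪V t, V t⟫ := by
      funext s; rw [real_inner_self_eq_norm_sq]
    rw [heq]
    convert h using 1
    · rfl
    · rfl
    rw [real_inner_comm (V t) (V' t)]; ring
  -- On Icc, V' t = A (X t) (V t)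
  have hV'eq : ∀ t ∈ Icc (0:ℝ) T, V' t = fderiv ℝ G (X t) (V t) := by
    intro t ht
    have h1 : deriv (deriv X) t = fderiv ℝ G (X t) (G (X t)) := by
      rw [hNewton t ht]; exact newton_rw d F hF (X t)
    simp only [hV'def, hVdef, h1, map_add]
    abel
  -- differential inequality ⇒ pointwise bound
  have hpt : ∀ t ∈ Icc (0:ℝ) T, g t ≤ Real.exp (-(2*ρ)*T) * Real.exp ((2*ρ)*t) * g T := by
    set h : ℝ → ℝ := fun t => Real.exp (-(2*ρ)*t) * g t with hhdef
    have hh : ∀ t, HasDerivAt h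
        (Real.exp (-(2*ρ)*t) * (-(2*ρ)) * g t + Real.exp (-(2*ρ)*t) * (2*⟪V' t, V t⟫)) t := by
      intro t
      have hlin : HasDerivAt (fun s : ℝ => -(2*ρ)*s) (-(2*ρ)) t := by
        simpa using (hasDerivAt_id t).const_mul (-(2*ρ))
      have he : HasDerivAt (fun t => Real.exp (-(2*ρ)*t)) (Real.exp (-(2*ρ)*t) * (-(2*ρ))) t :=
        hlin.exp
      exact he.mul (hg t)
    have hhcont : Continuous h :=
      (Real.continuous_exp.comp (continuous_const.mul continuous_id)).mul hgcont
    have hmono : MonotoneOn h (Icc 0 T) := by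
      apply monotoneOn_of_deriv_nonneg (convex_Icc 0 T) hhcont.continuousOn
      · intro s _; exact ((hh s).differentiableAt).differentiableWithinAt
      · intro s hs
        rw [interior_Icc] at hs
        rw [(hh s).deriv]
        have hs' : s ∈ Icc (0:ℝ) T := Ioo_subset_Icc_self hs
        have h1 : ⟪V' s, V s⟫ = ⟪fderiv ℝ G (X s) (V s), V s⟫ := by rw [hV'eq s hs']
        have h2 := hconv (X s) (V s)
        have hgs : g s = ‖V s‖ ^ 2 := rfl
        rw [h1]
        have h3 : 0 ≤ ⟪fderiv ℝ G (X s) (V s), V s⟫ - ρ * g s := by rw [hgs]; linarith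
        nlinarith [mul_nonneg (Real.exp_pos (-(2*ρ)*s)).le h3]
    intro t ht
    have hle : Real.exp (-(2*ρ)*t) * g t ≤ Real.exp (-(2*ρ)*T) * g T :=
      hmono ht (right_mem_Icc.mpr hT.le) ht.2
    have hmul : Real.exp ((2*ρ)*t) * Real.exp (-(2*ρ)*t) = 1 := by
      rw [← Real.exp_add]; ring_nf; exact Real.exp_zero
    calc g t = Real.exp ((2*ρ)*t) * (Real.exp (-(2*ρ)*t) * g t) := by
          rw [← mul_assoc, hmul, one_mul]
      _ ≤ Real.exp ((2*ρ)*t) * (Real.exp (-(2*ρ)*T) * g T) :=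
          mul_le_mul_of_nonneg_left hle (Real.exp_pos _).le
      _ = Real.exp (-(2*ρ)*T) * Real.exp ((2*ρ)*t) * g T := by ring
  -- integral of rhs
  have hptint : (∫ t in (0:ℝ)..T, g t)
      ≤ ((1 - Real.exp (-2 * ρ * T)) / (2 * ρ)) * g T := by
    have hbcont : Continuous (fun t => Real.exp (-(2*ρ)*T) * Real.exp ((2*ρ)*t) * g T) :=
      (continuous_const.mul (Real.continuous_exp.comp (continuous_const.mul continuous_id))).mul
        continuous_const
    have hstep : (∫ t in (0:ℝ)..T, g t)
        ≤ ∫ t in (0:ℝ)..T, Real.exp (-(2*ρ)*T) * Real.exp ((2*ρ)*t) * g T :=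
      intervalIntegral.integral_mono_on hT.le (hgcont.intervalIntegrable 0 T)
        (hbcont.intervalIntegrable 0 T) hpt
    have hexpint : (∫ t in (0:ℝ)..T, Real.exp ((2*ρ)*t))
        = (Real.exp ((2*ρ)*T) - 1) / (2*ρ) := by
      have hd : ∀ t ∈ uIcc (0:ℝ) T,
          HasDerivAt (fun t => Real.exp ((2*ρ)*t) / (2*ρ)) (Real.exp ((2*ρ)*t)) t := by
        intro t _
        have hlin : HasDerivAt (fun s : ℝ => (2*ρ)*s) (2*ρ) t := by
          simpa using (hasDerivAt_id t).const_mul (2*ρ)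
        have he : HasDerivAt (fun t => Real.exp ((2*ρ)*t)) (Real.exp ((2*ρ)*t) * (2*ρ)) t :=
          hlin.exp
        have := he.div_const (2*ρ)
        convert this using 1
        · rfl
        · rfl
        field_simp
      rw [intervalIntegral.integral_eq_sub_of_hasDerivAt hd
        ((Real.continuous_exp.comp (continuous_const.mul continuous_id)).intervalIntegrable 0 T)]
      simp only [mul_zero, Real.exp_zero]
      ring
    have hconsts : (∫ t in (0:ℝ)..T, Real.exp (-(2*ρ)*T) * Real.exp ((2*ρ)*t) * g T)
        = (Real.exp (-(2*ρ)*T) * g T) * ((Real.exp ((2*ρ)*T) - 1) / (2*ρ)) := by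
      have : (fun t => Real.exp (-(2*ρ)*T) * Real.exp ((2*ρ)*t) * g T)
          = fun t => (Real.exp (-(2*ρ)*T) * g T) * Real.exp ((2*ρ)*t) := by
        funext t; ring
      rw [this, intervalIntegral.integral_const_mul, hexpint]
    have hmul : Real.exp (-(2*ρ)*T) * Real.exp ((2*ρ)*T) = 1 := by
      rw [← Real.exp_add]; ring_nf; exact Real.exp_zero
    have hfinal : (Real.exp (-(2*ρ)*T) * g T) * ((Real.exp ((2*ρ)*T) - 1) / (2*ρ))
        = ((1 - Real.exp (-2 * ρ * T)) / (2 * ρ)) * g T := by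
      have hE : Real.exp (-2 * ρ * T) = Real.exp (-(2*ρ)*T) := by ring_nf
      rw [hE]
      field_simp
      rw [show (-(2*ρ*T):ℝ) = -(2*ρ)*T by ring]
      linear_combination ‖V T‖ ^ 2 * hmul
    rw [hconsts, hfinal] at hstep
    exact hstep
  -- LHS equals ∫ g
  have hlhs : (∫ t in (0:ℝ)..T, (‖deriv X t‖ ^ 2 + ‖G (X t)‖ ^ 2)) + 2 * (F y - F x)
      = ∫ t in (0:ℝ)..T, g t := by
    have hc1 : Continuous (fun t => ‖deriv X t‖ ^ 2 + ‖G (X t)‖ ^ 2) :=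
      (hdX.continuous.norm.pow 2).add ((hG.continuous.comp hX.continuous).norm.pow 2)
    have hc2 : Continuous (fun t => ⟪deriv X t, G (X t)⟫) :=
      hdX.continuous.inner (hG.continuous.comp hX.continuous)
    have hFt : ∀ t, HasDerivAt (fun t => F (X t)) ⟪deriv X t, G (X t)⟫ t := by
      intro t
      have hFd : DifferentiableAt ℝ F (X t) :=
        (hF.differentiable two_ne_zero).differentiableAt
      have := hFd.hasFDerivAt.comp_hasDerivAt t (hX1 t).hasDerivAt
      convert this using 1
      · rfl
      · rfl
      · rfl
      rw [real_inner_comm]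
      exact grad_inner d F (X t) (deriv X t)
    have hFTC : (∫ t in (0:ℝ)..T, ⟪deriv X t, G (X t)⟫) = F (X T) - F (X 0) :=
      intervalIntegral.integral_eq_sub_of_hasDerivAt (fun t _ => hFt t)
        (hc2.intervalIntegrable 0 T)
    have hexpand : ∀ t, g t
        = (‖deriv X t‖ ^ 2 + ‖G (X t)‖ ^ 2) + 2 * ⟪deriv X t, G (X t)⟫ := by
      intro t
      show ‖deriv X t + G (X t)‖ ^ 2 = _
      rw [norm_add_sq_real]; ring
    have : (∫ t in (0:ℝ)..T, g t)
        = (∫ t in (0:ℝ)..T, (‖deriv X t‖ ^ 2 + ‖G (X t)‖ ^ 2))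
          + ∫ t in (0:ℝ)..T, 2 * ⟪deriv X t, G (X t)⟫ := by
      rw [← intervalIntegral.integral_add (f := fun t => ‖deriv X t‖ ^ 2 + ‖G (X t)‖ ^ 2)
        (g := fun t => 2 * ⟪deriv X t, G (X t)⟫) (hc1.intervalIntegrable 0 T)
        ((continuous_const.mul hc2).intervalIntegrable 0 T)]
      exact intervalIntegral.integral_congr fun t _ => hexpand t
    rw [this, intervalIntegral.integral_const_mul, hFTC, hx, hy]
  have hgT : g T = ‖deriv X T + G y‖ ^ 2 := by rw [hgdef]; simp [hVdef, hy]
  calc (∫ t in (0:ℝ)..T, (‖deriv X t‖ ^ 2 + ‖G (X t)‖ ^ 2)) + 2 * (F y - F x)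
      = ∫ t in (0:ℝ)..T, g t := hlhs
    _ ≤ ((1 - Real.exp (-2 * ρ * T)) / (2 * ρ)) * g T := hptint
    _ = ((1 - Real.exp (-2 * ρ * T)) / (2 * ρ)) * ‖deriv X T + G y‖ ^ 2 := by rw [hgT]
end

section
/- Let F : ℝ^d → ℝ be C² with F'' ≥ ρ Id (ρ ≠ 0), and let X : [0,T] → ℝ^d solve Ẍ = F''(X)F'(X) with X(0)=x, X(T)=y. Then ∫₀ᵀ (|Ẋ(t)|² + |F'(X(t))|²) dt + 2(F(y) − F(x)) ≥ ((e^{2ρT} − 1)/(2ρ)) |Ẋ(0) + F'(x)|². -/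
open Real Set InnerProductSpace
open scoped RealInnerProductSpace

variable {E : Type*} [NormedAddCommGroup E] [InnerProductSpace ℝ E] [CompleteSpace E]

lemma aux_grad_eq (F : E → ℝ) :
    gradient F = fun z => (toDual ℝ E).symm (fderiv ℝ F z) := rfl

lemma aux_hasFDerivAt_gradient {F : E → ℝ} (hF : ContDiff ℝ 2 F) (z : E) :
    HasFDerivAt (gradient F)
      (((toDual ℝ E).symm.toContinuousLinearEquiv :
        (E →L[ℝ] ℝ) ≃L[ℝ] E).toContinuousLinearMap.comp (fderiv ℝ (fderiv ℝ F) z)) z := by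
  have hd : HasFDerivAt (fderiv ℝ F) (fderiv ℝ (fderiv ℝ F) z) z :=
    (((hF.fderiv_right (m := 1) (by norm_num)).differentiable one_ne_zero) z).hasFDerivAt
  exact (((toDual ℝ E).symm.toContinuousLinearEquiv :
    (E →L[ℝ] ℝ) ≃L[ℝ] E).toContinuousLinearMap.hasFDerivAt).comp z hd

lemma aux_inner_fderiv_gradient {F : E → ℝ} (hF : ContDiff ℝ 2 F) (z v w : E) :
    ⟪fderiv ℝ (gradient F) z v, w⟫ = fderiv ℝ (fderiv ℝ F) z v w := by
  rw [(aux_hasFDerivAt_gradient hF z).fderiv]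
  simp [toDual_symm_apply]

lemma aux_symm {F : E → ℝ} (hF : ContDiff ℝ 2 F) (z v w : E) :
    ⟪fderiv ℝ (gradient F) z v, w⟫ = ⟪fderiv ℝ (gradient F) z w, v⟫ := by
  rw [aux_inner_fderiv_gradient hF, aux_inner_fderiv_gradient hF]
  exact (hF.contDiffAt.isSymmSndFDerivAt (by simp)).eq v w

lemma aux_grad_norm_sq {F : E → ℝ} (hF : ContDiff ℝ 2 F) (z : E) :
    gradient (fun w => ‖gradient F w‖ ^ 2) z
      = (2 : ℝ) • fderiv ℝ (gradient F) z (gradient F z) := by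
  have hgd : HasFDerivAt (gradient F) (fderiv ℝ (gradient F) z) z :=
    ((aux_hasFDerivAt_gradient hF z).differentiableAt).hasFDerivAt
  have H1 := hgd.inner ℝ hgd
  have H2 : HasGradientAt (fun w => ‖gradient F w‖ ^ 2)
      ((2 : ℝ) • fderiv ℝ (gradient F) z (gradient F z)) z := by
    rw [hasGradientAt_iff_hasFDerivAt]
    have : (fun w => ‖gradient F w‖ ^ 2) = fun w => ⟪gradient F w, gradient F w⟫ := by
      funext w; rw [real_inner_self_eq_norm_sq]
    rw [this]
    refine H1.congr_fderiv ?_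
    ext w
    simp only [InnerProductSpace.toDual_apply_apply, ContinuousLinearMap.coe_comp',
      Function.comp_apply, fderivInnerCLM_apply, ContinuousLinearMap.prod_apply]
    rw [real_inner_smul_left]
    rw [aux_symm hF z (gradient F z) w, real_inner_comm (gradient F z)]
    ring
  exact H2.gradient

lemma aux_grad_contDiff {F : E → ℝ} (hF : ContDiff ℝ 2 F) :
    ContDiff ℝ 1 (gradient F) := by
  rw [aux_grad_eq]
  exact ((toDual ℝ E).symm.contDiff).comp (hF.fderiv_right (by norm_num))

theorem stmt_11 (d : ℕ) (T ρ : ℝ) (hT : 0 < T) (hρ : ρ ≠ 0)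
    (F : EuclideanSpace ℝ (Fin d) → ℝ) (hF : ContDiff ℝ 2 F)
    (hconv : ∀ x v : EuclideanSpace ℝ (Fin d),
      ρ * ‖v‖ ^ 2 ≤ ⟪fderiv ℝ (gradient F) x v, v⟫)
    (X : ℝ → EuclideanSpace ℝ (Fin d)) (hX : ContDiff ℝ 2 X)
    (x y : EuclideanSpace ℝ (Fin d)) (hx : X 0 = x) (hy : X T = y)
    (hNewton : ∀ t ∈ Icc (0:ℝ) T,
      deriv (deriv X) t = (1/2 : ℝ) • gradient (fun z => ‖gradient F z‖ ^ 2) (X t)) :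
    (∫ t in (0:ℝ)..T, (‖deriv X t‖ ^ 2 + ‖gradient F (X t)‖ ^ 2)) + 2 * (F y - F x)
      ≥ ((Real.exp (2 * ρ * T) - 1) / (2 * ρ)) * ‖deriv X 0 + gradient F x‖ ^ 2 := by
  -- regularity
  have hXd : Differentiable ℝ X := hX.differentiable (by norm_num)
  have hX1 : ContDiff ℝ 1 (deriv X) := by
    have h2 : ContDiff ℝ ((1 : WithTop ℕ∞) + 1) X := by
      convert hX using 2
      norm_num
    exact (contDiff_succ_iff_deriv.mp h2).2.2
  have hXdd : Differentiable ℝ (deriv X) := hX1.differentiable one_ne_zero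
  have hg1 : ContDiff ℝ 1 (gradient F) := aux_grad_contDiff hF
  have hgd : Differentiable ℝ (gradient F) := hg1.differentiable one_ne_zero
  set v : ℝ → EuclideanSpace ℝ (Fin d) := fun t => deriv X t + gradient F (X t) with hv_def
  have hvc : Continuous v := hX1.continuous.add (hg1.continuous.comp hXd.continuous)
  have hv : ∀ t, HasDerivAt v
      (deriv (deriv X) t + fderiv ℝ (gradient F) (X t) (deriv X t)) t := fun t =>
    ((hXdd t).hasDerivAt).add (((hgd (X t)).hasFDerivAt).comp_hasDerivAt t (hXd t).hasDerivAt)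
  have hv' : ∀ t ∈ Icc (0:ℝ) T,
      HasDerivAt v (fderiv ℝ (gradient F) (X t) (v t)) t := by
    intro t ht
    have h := hv t
    rw [hNewton t ht, aux_grad_norm_sq hF (X t)] at h
    have : fderiv ℝ (gradient F) (X t) (v t)
        = (1/2 : ℝ) • (2 : ℝ) • fderiv ℝ (gradient F) (X t) (gradient F (X t))
          + fderiv ℝ (gradient F) (X t) (deriv X t) := by
      rw [smul_smul]; norm_num
      rw [hv_def]
      simp only [map_add]
      abel
    rw [this]
    exact h
  -- the scalar function φ = ⟪v, v⟫ and Grönwall via ψ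
  set φ : ℝ → ℝ := fun t => ⟪v t, v t⟫ with hφ_def
  have hφ_eq : ∀ t, φ t = ‖v t‖ ^ 2 := fun t => real_inner_self_eq_norm_sq _
  have hφdiff : ∀ t, HasDerivAt φ
      (⟪v t, deriv (deriv X) t + fderiv ℝ (gradient F) (X t) (deriv X t)⟫
        + ⟪deriv (deriv X) t + fderiv ℝ (gradient F) (X t) (deriv X t), v t⟫) t :=
    fun t => (hv t).inner ℝ (hv t)
  set ψ : ℝ → ℝ := fun t => Real.exp (-(2*ρ)*t) * φ t with hψ_def
  have hexp : ∀ t : ℝ, HasDerivAt (fun s => Real.exp (-(2*ρ)*s))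
      (Real.exp (-(2*ρ)*t) * (-(2*ρ))) t := fun t => by
    simpa using (((hasDerivAt_id t).const_mul (-(2*ρ)))).exp
  have hψdiff : Differentiable ℝ ψ := by
    apply Differentiable.mul
    · exact fun t => (hexp t).differentiableAt
    · exact fun t => (hφdiff t).differentiableAt
  have hψderiv : ∀ t ∈ Icc (0:ℝ) T, HasDerivAt ψ
      (Real.exp (-(2*ρ)*t) * (-(2*ρ)) * φ t
        + Real.exp (-(2*ρ)*t) * (⟪v t, fderiv ℝ (gradient F) (X t) (v t)⟫
          + ⟪fderiv ℝ (gradient F) (X t) (v t), v t⟫)) t := by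
    intro t ht
    exact (hexp t).mul ((hv' t ht).inner ℝ (hv' t ht))
  have hψmono : MonotoneOn ψ (Icc 0 T) := by
    apply monotoneOn_of_deriv_nonneg (convex_Icc 0 T) hψdiff.continuous.continuousOn
      hψdiff.differentiableOn
    intro t ht
    rw [interior_Icc] at ht
    rw [(hψderiv t (Ioo_subset_Icc_self ht)).deriv]
    have h1 : ρ * ‖v t‖ ^ 2 ≤ ⟪fderiv ℝ (gradient F) (X t) (v t), v t⟫ := hconv (X t) (v t)
    have h2 : ⟪v t, fderiv ℝ (gradient F) (X t) (v t)⟫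
        = ⟪fderiv ℝ (gradient F) (X t) (v t), v t⟫ := real_inner_comm _ _
    rw [h2, hφ_eq]
    have h3 : (0:ℝ) < Real.exp (-(2*ρ)*t) := Real.exp_pos _
    have : Real.exp (-(2*ρ)*t) * (-(2*ρ)) * ‖v t‖ ^ 2
        + Real.exp (-(2*ρ)*t) * (⟪fderiv ℝ (gradient F) (X t) (v t), v t⟫
          + ⟪fderiv ℝ (gradient F) (X t) (v t), v t⟫)
        = 2 * Real.exp (-(2*ρ)*t)
          * (⟪fderiv ℝ (gradient F) (X t) (v t), v t⟫ - ρ * ‖v t‖ ^ 2) := by ring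
    rw [this]
    have : (0:ℝ) ≤ ⟪fderiv ℝ (gradient F) (X t) (v t), v t⟫ - ρ * ‖v t‖ ^ 2 :=
      sub_nonneg.mpr h1
    positivity
  -- pointwise exponential lower bound
  have key : ∀ t ∈ Icc (0:ℝ) T, Real.exp (2*ρ*t) * ‖v 0‖ ^ 2 ≤ ‖v t‖ ^ 2 := by
    intro t ht
    have h0 : (0:ℝ) ∈ Icc (0:ℝ) T := ⟨le_refl _, le_of_lt hT⟩
    have := hψmono h0 ht ht.1
    rw [hψ_def] at this
    simp only [mul_zero, Real.exp_zero, one_mul] at this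
    have hpos : (0:ℝ) < Real.exp (2*ρ*t) := Real.exp_pos _
    have h4 := mul_le_mul_of_nonneg_left this (le_of_lt hpos)
    rw [← mul_assoc, ← Real.exp_add] at h4
    have h5 : 2*ρ*t + -(2*ρ)*t = 0 := by ring
    rw [h5, Real.exp_zero, one_mul] at h4
    rw [hφ_eq, hφ_eq] at h4
    exact h4
  -- integrability
  have hcont1 : Continuous fun t => ‖v t‖ ^ 2 := (hvc.norm).pow 2
  have hcont2 : Continuous fun t => Real.exp (2*ρ*t) * ‖v 0‖ ^ 2 :=
    (Real.continuous_exp.comp (continuous_const.mul continuous_id)).mul continuous_const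
  -- integral comparison
  have hmono : (∫ t in (0:ℝ)..T, Real.exp (2*ρ*t) * ‖v 0‖ ^ 2)
      ≤ ∫ t in (0:ℝ)..T, ‖v t‖ ^ 2 :=
    intervalIntegral.integral_mono_on (le_of_lt hT)
      (hcont2.intervalIntegrable 0 T) (hcont1.intervalIntegrable 0 T) key
  -- compute the exponential integral
  have hexp2 : ∀ t : ℝ, HasDerivAt (fun s => Real.exp (2*ρ*s) / (2*ρ) * ‖v 0‖ ^ 2)
      (Real.exp (2*ρ*t) * ‖v 0‖ ^ 2) t := by
    intro t
    have h2ρ : (2*ρ : ℝ) ≠ 0 := mul_ne_zero two_ne_zero hρ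
    have h := ((((hasDerivAt_id t).const_mul (2*ρ)).exp).div_const (2*ρ)).mul_const (‖v 0‖^2)
    simp only [id_eq, mul_one] at h
    refine h.congr_deriv ?_
    field_simp
  have hIexp : (∫ t in (0:ℝ)..T, Real.exp (2*ρ*t) * ‖v 0‖ ^ 2)
      = ((Real.exp (2*ρ*T) - 1) / (2*ρ)) * ‖v 0‖ ^ 2 := by
    rw [intervalIntegral.integral_eq_sub_of_hasDerivAt (fun t _ => hexp2 t)
      (hcont2.intervalIntegrable 0 T)]
    field_simp
    rw [mul_zero, Real.exp_zero]
  -- identity for the LHS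
  have hFd : ∀ t : ℝ, HasDerivAt (fun s => F (X s)) ⟪gradient F (X t), deriv X t⟫ t := by
    intro t
    have hGF : HasGradientAt F (gradient F (X t)) (X t) :=
      ((hF.differentiable (by norm_num)) (X t)).hasGradientAt
    have h := (hasGradientAt_iff_hasFDerivAt.mp hGF).comp_hasDerivAt t (hXd t).hasDerivAt
    simp only [InnerProductSpace.toDual_apply_apply] at h
    exact h
  have hcont3 : Continuous fun t => ⟪gradient F (X t), deriv X t⟫ :=
    (hg1.continuous.comp hXd.continuous).inner hX1.continuous
  have hFTC : (∫ t in (0:ℝ)..T, ⟪gradient F (X t), deriv X t⟫) = F y - F x := by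
    rw [intervalIntegral.integral_eq_sub_of_hasDerivAt (fun t _ => hFd t)
      (hcont3.intervalIntegrable 0 T), hy, hx]
  have hsplit : ∀ t : ℝ, ‖v t‖ ^ 2
      = (‖deriv X t‖ ^ 2 + ‖gradient F (X t)‖ ^ 2) + 2 * ⟪gradient F (X t), deriv X t⟫ := by
    intro t
    rw [hv_def]
    rw [@norm_add_sq_real]
    rw [real_inner_comm]
    ring
  have hcont4 : Continuous fun t => ‖deriv X t‖ ^ 2 + ‖gradient F (X t)‖ ^ 2 :=
    (hX1.continuous.norm.pow 2).add ((hg1.continuous.comp hXd.continuous).norm.pow 2)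
  have hIv : (∫ t in (0:ℝ)..T, ‖v t‖ ^ 2)
      = (∫ t in (0:ℝ)..T, (‖deriv X t‖ ^ 2 + ‖gradient F (X t)‖ ^ 2)) + 2 * (F y - F x) := by
    have : (∫ t in (0:ℝ)..T, ‖v t‖ ^ 2)
        = (∫ t in (0:ℝ)..T, ((‖deriv X t‖ ^ 2 + ‖gradient F (X t)‖ ^ 2)
            + 2 * ⟪gradient F (X t), deriv X t⟫)) := by
      congr 1; funext t; exact hsplit t
    rw [this, intervalIntegral.integral_add (g := fun t => 2 * ⟪gradient F (X t), deriv X t⟫) (hcont4.intervalIntegrable 0 T)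
      ((continuous_const.mul hcont3).intervalIntegrable 0 T),
      intervalIntegral.integral_const_mul, hFTC]
  -- conclude
  have hv0 : v 0 = deriv X 0 + gradient F x := by rw [hv_def]; simp [hx]
  rw [ge_iff_le, ← hv0, ← hIv, ← hIexp]
  exact hmono
end

section
/- Let F : ℝ^d → ℝ be C² and (0,n)-convex, i.e. F''(x) ≥ (1/n) F'(x) ⊗ F'(x) as quadratic forms for all x, with n > 0. Let X : [0,T] → ℝ^d solve Ẍ = F''(X)F'(X), let E = |Ẋ(t)|² − |F'(X(t))|² be the conserved energy, and set Φ(t) = ∫₀ᵗ |Ẋ(s) + F'(X(s))|² ds − tE. Then Φ''(t) ≥ Φ'(t)²/(2n) on (0,T). -/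
open Real Set InnerProductSpace
open scoped RealInnerProductSpace

noncomputable def dualToVec (E : Type*) [NormedAddCommGroup E] [InnerProductSpace ℝ E]
    [CompleteSpace E] : StrongDual ℝ E →L[ℝ] E :=
  LinearMap.mkContinuous
    { toFun := fun φ => (toDual ℝ E).symm φ
      map_add' := fun φ ψ => by simp
      map_smul' := fun c φ => by simp }
    1 (fun φ => by simp)

lemma gradient_eq_dualToVec {E : Type*} [NormedAddCommGroup E] [InnerProductSpace ℝ E]
    [CompleteSpace E] (f : E → ℝ) : gradient f = fun x => dualToVec E (fderiv ℝ f x) := rfl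

theorem stmt_12 (d : ℕ) (T n : ℝ) (hT : 0 < T) (hn : 0 < n)
    (F : EuclideanSpace ℝ (Fin d) → ℝ) (hF : ContDiff ℝ 2 F)
    (hconv : ∀ x v : EuclideanSpace ℝ (Fin d),
      (1 / n) * ⟪gradient F x, v⟫ ^ 2 ≤ ⟪fderiv ℝ (gradient F) x v, v⟫)
    (X : ℝ → EuclideanSpace ℝ (Fin d)) (hX : ContDiff ℝ 2 X)
    (hNewton : ∀ t ∈ Icc (0:ℝ) T,
      deriv (deriv X) t = (1/2 : ℝ) • gradient (fun z => ‖gradient F z‖ ^ 2) (X t))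
    (E : ℝ)
    (hE : ∀ t ∈ Icc (0:ℝ) T, ‖deriv X t‖ ^ 2 - ‖gradient F (X t)‖ ^ 2 = E) :
    ∀ t ∈ Ioo (0:ℝ) T,
      (deriv (fun u => (∫ s in (0:ℝ)..u, ‖deriv X s + gradient F (X s)‖ ^ 2) - u * E) t) ^ 2
          / (2 * n)
        ≤ deriv (deriv
            (fun u => (∫ s in (0:ℝ)..u, ‖deriv X s + gradient F (X s)‖ ^ 2) - u * E)) t := by
  intro t ht
  have htIcc : t ∈ Icc (0:ℝ) T := ⟨le_of_lt ht.1, le_of_lt ht.2⟩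
  -- smoothness facts
  have hF1 : ContDiff ℝ 1 (fderiv ℝ F) := hF.fderiv_right (by norm_num)
  have hG1 : ContDiff ℝ 1 (gradient F) := by
    rw [gradient_eq_dualToVec]; exact (dualToVec _).contDiff.comp hF1
  have hGdiff : Differentiable ℝ (gradient F) := hG1.differentiable (by norm_num)
  have hDX1 : ContDiff ℝ 1 (deriv X) := by
    have h2 : ContDiff ℝ (1 + 1 : ℕ) X := by exact_mod_cast hX
    exact (contDiff_succ_iff_deriv.mp h2).2.2
  have hXdiff : Differentiable ℝ X := hX.differentiable (by norm_num)
  have hDXdiff : Differentiable ℝ (deriv X) := hDX1.differentiable (by norm_num)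
  set Y : ℝ → EuclideanSpace ℝ (Fin d) := fun u => deriv X u + gradient F (X u) with hYdef
  set Y' : ℝ → EuclideanSpace ℝ (Fin d) :=
    fun u => deriv (deriv X) u + fderiv ℝ (gradient F) (X u) (deriv X u) with hY'def
  have hYderiv : ∀ u, HasDerivAt Y (Y' u) u := by
    intro u
    have h1 : HasDerivAt (deriv X) (deriv (deriv X) u) u := (hDXdiff u).hasDerivAt
    have h2 : HasDerivAt (fun s => gradient F (X s))
        (fderiv ℝ (gradient F) (X u) (deriv X u)) u :=
      (hGdiff (X u)).hasFDerivAt.comp_hasDerivAt u (hXdiff u).hasDerivAt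
    exact h1.add h2
  have hYcont : Continuous Y := (hDX1.continuous).add (hG1.continuous.comp hX.continuous)
  set g : ℝ → ℝ := fun s => ‖deriv X s + gradient F (X s)‖ ^ 2 with hgdef
  have hgY : ∀ u, HasDerivAt g (2 * ⟪Y u, Y' u⟫) u := by
    intro u
    have h := (hYderiv u).inner ℝ (hYderiv u)
    have hfun : (fun s => ⟪Y s, Y s⟫) = g := by
      funext s; exact real_inner_self_eq_norm_sq (Y s)
    rw [hfun] at h
    have : ⟪Y u, Y' u⟫ + ⟪Y' u, Y u⟫ = 2 * ⟪Y u, Y' u⟫ := by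
      rw [real_inner_comm (Y' u) (Y u)]; ring
    rwa [this] at h
  have hgcont : Continuous g := by
    have : Continuous fun s => ‖Y s‖ ^ 2 := (hYcont.norm).pow 2
    simpa [hYdef] using this
  -- first derivative
  have hΦ : ∀ u, HasDerivAt (fun u => (∫ s in (0:ℝ)..u, g s) - u * E) (g u - E) u := by
    intro u
    exact ((hgcont.integral_hasStrictDerivAt 0 u).hasDerivAt).sub (hasDerivAt_mul_const E)
  have hd1 : (deriv (fun u => (∫ s in (0:ℝ)..u, g s) - u * E)) = fun u => g u - E :=
    funext fun u => (hΦ u).deriv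
  rw [hd1]
  have hd2 : deriv (fun u => g u - E) t = 2 * ⟪Y t, Y' t⟫ := ((hgY t).sub_const E).deriv
  rw [hd2]
  show (g t - E) ^ 2 / (2 * n) ≤ 2 * ⟪Y t, Y' t⟫
  -- energy identity
  have henergy : g t - E = 2 * ⟪Y t, gradient F (X t)⟫ := by
    rw [← hE t htIcc]
    simp only [hgdef, hYdef, norm_add_sq_real, inner_add_left, real_inner_self_eq_norm_sq]
    ring
  rw [henergy]
  -- second derivative structure
  set z := X t with hzdef
  set D := fderiv ℝ (fderiv ℝ F) z with hDdef
  have hD : HasFDerivAt (fderiv ℝ F) D z := ((hF1.differentiable (by norm_num)) z).hasFDerivAt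
  have hGf : HasFDerivAt (gradient F) ((dualToVec _).comp D) z := by
    rw [gradient_eq_dualToVec]
    exact ((dualToVec _).hasFDerivAt).comp z hD
  have hBapp : ∀ v, fderiv ℝ (gradient F) z v = (toDual ℝ _).symm (D v) := by
    intro v; rw [hGf.fderiv]; rfl
  have hsnd : ∀ v w, D v w = D w v := fun v w =>
    (hF.contDiffAt.isSymmSndFDerivAt (by norm_num)) v w
  have hsym : ∀ v w : EuclideanSpace ℝ (Fin d),
      ⟪fderiv ℝ (gradient F) z v, w⟫ = ⟪fderiv ℝ (gradient F) z w, v⟫ := by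
    intro v w
    rw [hBapp v, hBapp w, toDual_symm_apply, toDual_symm_apply]
    exact hsnd v w
  -- Newton's law: inner of second derivative term with Y t
  have hHd : ∀ v, ⟪deriv (deriv X) t, v⟫ = ⟪fderiv ℝ (gradient F) z v, gradient F z⟫ := by
    intro v
    rw [hNewton t htIcc]
    have hHfun : (fun y : EuclideanSpace ℝ (Fin d) => ‖gradient F y‖ ^ 2)
        = fun y => ⟪gradient F y, gradient F y⟫ := by
      funext y; rw [real_inner_self_eq_norm_sq]
    have hginner : ⟪gradient (fun y : EuclideanSpace ℝ (Fin d) => ‖gradient F y‖ ^ 2) z, v⟫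
        = fderiv ℝ (fun y : EuclideanSpace ℝ (Fin d) => ‖gradient F y‖ ^ 2) z v := by
      rw [gradient]; exact toDual_symm_apply
    have hfd : fderiv ℝ (fun y : EuclideanSpace ℝ (Fin d) => ‖gradient F y‖ ^ 2) z v
        = 2 * ⟪fderiv ℝ (gradient F) z v, gradient F z⟫ := by
      rw [hHfun, fderiv_inner_apply ℝ (hGdiff z) (hGdiff z) v]
      rw [real_inner_comm (gradient F z)]
      ring
    rw [real_inner_smul_left, hginner, hfd]
    ring
  -- put it together
  have hkey : 2 * ⟪Y t, Y' t⟫ = 2 * ⟪fderiv ℝ (gradient F) z (Y t), Y t⟫ := by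
    have e1 : ⟪Y t, deriv (deriv X) t⟫ = ⟪fderiv ℝ (gradient F) z (Y t), gradient F z⟫ := by
      rw [real_inner_comm]; exact hHd (Y t)
    have e2 : ⟪Y t, fderiv ℝ (gradient F) (X t) (deriv X t)⟫
        = ⟪fderiv ℝ (gradient F) z (Y t), deriv X t⟫ := by
      rw [real_inner_comm, ← hzdef]
      exact hsym (deriv X t) (Y t)
    have hYt : Y t = deriv X t + gradient F z := by rw [hzdef]
    have e3 : ⟪Y t, Y' t⟫
        = ⟪Y t, deriv (deriv X) t⟫ + ⟪Y t, fderiv ℝ (gradient F) (X t) (deriv X t)⟫ := by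
      rw [hY'def]; exact inner_add_right _ _ _
    rw [e3, e1, e2]
    nth_rewrite 3 [hYt]
    rw [inner_add_right]
    ring
  rw [hkey]
  have hc := hconv z (Y t)
  rw [one_div, inv_mul_le_iff₀ hn] at hc
  have hGz : ⟪Y t, gradient F z⟫ = ⟪gradient F z, Y t⟫ := real_inner_comm _ _
  rw [hGz]
  have h2n : (0:ℝ) < 2 * n := by linarith
  rw [div_le_iff₀ h2n]
  nlinarith [hc]
end
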